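/- Let p be an odd prime, n a positive integer, R = F_p[X]/(X^n+1), g a monic divisor of X^n + 1 in F_p[X], and a ∈ R. Then the subspace S = {(u·ḡ, u·a·ḡ) : u ∈ R} of R × R ≅ F_p^n × F_p^n (where ḡ is the image of g in R) has dimension n − deg g as a vector space over F_p. (Hence the stabilizer dimension of the associated km-Frobenius negacyclic code equals deg g.) -/

import Mathlib

open Polynomial

/-- The cyclotomic ring `R = F_p[X]/(X^n + 1)`. -/
abbrev Rpn (p n : ℕ) := Polynomial (ZMod p) ⧸ Ideal.span {(X : Polynomial (ZMod p)) ^ n + 1}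

/-- The quotient map `F_p[X] → R`. -/
noncomputable def mkR (p n : ℕ) : Polynomial (ZMod p) →+* Rpn p n :=
  Ideal.Quotient.mk (Ideal.span {(X : Polynomial (ZMod p)) ^ n + 1})

/-- The polynomial `a_0 + a_1 X + ⋯ + a_{n−1} X^{n−1}` attached to a vector. -/
noncomputable def toPoly (p n : ℕ) (a : Fin n → ZMod p) : Polynomial (ZMod p) :=
  ∑ j : Fin n, C (a j) * X ^ (j : ℕ)

/-- The identification `F_p^n → R`, `a ↦ a(x)`. -/
noncomputable def toR (p n : ℕ) (a : Fin n → ZMod p) : Rpn p n := mkR p n (toPoly p n a)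

set_option maxHeartbeats 1000000 in
/-- the subspace `S = {(u·ḡ, u·a·ḡ) : u ∈ R}` of `F_p^n × F_p^n` has
dimension `n − deg g` over `F_p` (hence the stabilizer dimension of the associated code
is `deg g`). -/
theorem stmt17 (p n : ℕ) [Fact p.Prime] (hp : Odd p) (hn : 0 < n)
    (g : Polynomial (ZMod p)) (hgm : g.Monic) (hgdvd : g ∣ X ^ n + 1)
    (a : Rpn p n) :
    ∃ W : Submodule (ZMod p) ((Fin n → ZMod p) × (Fin n → ZMod p)),
      (W : Set ((Fin n → ZMod p) × (Fin n → ZMod p)))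
          = {ab | ∃ u : Rpn p n, toR p n ab.1 = u * mkR p n g ∧
              toR p n ab.2 = u * a * mkR p n g} ∧
      Module.finrank (ZMod p) W = n - g.natDegree := by
  classical
  have hfm : ((X : Polynomial (ZMod p)) ^ n + 1).Monic := by
    have h1 : ((1 : Polynomial (ZMod p))).degree < (n : WithBot ℕ) := by
      apply lt_of_le_of_lt degree_one_le
      exact_mod_cast hn
    exact monic_X_pow_add h1
  have hfd : ((X : Polynomial (ZMod p)) ^ n + 1).natDegree = n := by
    simpa using (natDegree_X_pow_add_C (n := n) (r := (1 : ZMod p)))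
  -- power basis of R over F_p
  let pb : PowerBasis (ZMod p) (Rpn p n) := AdjoinRoot.powerBasis' hfm
  have hdim : pb.dim = n := hfd
  let b : Module.Basis (Fin n) (ZMod p) (Rpn p n) := pb.basis.reindex (finCongr hdim)
  haveI : Module.Finite (ZMod p) (Rpn p n) := Module.Finite.of_basis b
  have hfr : Module.finrank (ZMod p) (Rpn p n) = n := by
    rw [Module.finrank_eq_card_basis b, Fintype.card_fin]
  -- the identification e = toR
  let e : (Fin n → ZMod p) ≃ₗ[ZMod p] Rpn p n := b.equivFun.symm
  have he : ∀ v : Fin n → ZMod p, e v = toR p n v := by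
    intro v
    have hb : ∀ i : Fin n, b i = mkR p n (X ^ (i : ℕ)) := by
      intro i
      show pb.basis.reindex (finCongr hdim) i = _
      rw [Module.Basis.reindex_apply, pb.basis_eq_pow]
      have : pb.gen = mkR p n X := rfl
      simp [this, ← map_pow]
    rw [Module.Basis.equivFun_symm_apply]
    unfold toR toPoly
    rw [map_sum]
    refine Finset.sum_congr rfl fun i _ => ?_
    rw [hb i, map_mul]
    exact (Algebra.smul_def (v i) ((mkR p n) (X ^ (i:ℕ)))).trans rfl
  -- the linear map φ
  set G : Rpn p n := mkR p n g with hG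
  let ψ : Rpn p n →ₗ[ZMod p] Rpn p n := LinearMap.mulRight (ZMod p) G
  let φ : Rpn p n →ₗ[ZMod p] Rpn p n × Rpn p n :=
    ψ.prod (LinearMap.mulRight (ZMod p) (a * G))
  refine ⟨Submodule.comap ((e.prodCongr e).toLinearMap) (LinearMap.range φ), ?_, ?_⟩
  · ext ab
    simp only [SetLike.mem_coe, Submodule.mem_comap, LinearMap.mem_range, Set.mem_setOf_eq,
      LinearEquiv.coe_coe, LinearEquiv.prodCongr_apply, LinearMap.prod_apply, Function.prod, Prod.mk.injEq,
      LinearMap.mulRight_apply, φ, ψ]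
    constructor
    · rintro ⟨u, h1, h2⟩
      exact ⟨u, by rw [← he ab.1, ← h1], by rw [← he ab.2, ← h2, mul_assoc]⟩
    · rintro ⟨u, h1, h2⟩
      exact ⟨u, by rw [he ab.1, h1], by rw [he ab.2, h2, mul_assoc]⟩
  · -- dimension count
    have h1 : Module.finrank (ZMod p) (Submodule.comap ((e.prodCongr e).toLinearMap)
        (LinearMap.range φ)) = Module.finrank (ZMod p) (LinearMap.range φ) := by
      rw [Submodule.comap_equiv_eq_map_symm]
      exact LinearEquiv.finrank_map_eq _ _
    rw [h1]
    -- ker φ = ker ψ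
    have hker : LinearMap.ker φ = LinearMap.ker ψ := by
      ext u
      simp only [LinearMap.mem_ker, φ, ψ, LinearMap.prod_apply, Function.prod, Prod.mk_eq_zero,
        LinearMap.mulRight_apply]
      constructor
      · rintro ⟨h, _⟩; exact h
      · intro h
        refine ⟨h, ?_⟩
        rw [← mul_assoc, mul_comm u a, mul_assoc, h, mul_zero]
    have hrk1 := φ.finrank_range_add_finrank_ker
    have hrk2 := ψ.finrank_range_add_finrank_ker
    rw [hker] at hrk1
    rw [hfr] at hrk1 hrk2
    -- range ψ is the ideal (G)
    have hrange : LinearMap.range ψ = (Ideal.span {G}).restrictScalars (ZMod p) := by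
      ext x
      simp only [LinearMap.mem_range, LinearMap.mulRight_apply, ψ,
        Submodule.restrictScalars_mem, Ideal.mem_span_singleton]
      constructor
      · rintro ⟨u, rfl⟩; exact ⟨u, mul_comm u G⟩
      · rintro ⟨u, rfl⟩; exact ⟨u, mul_comm u G⟩
    -- the quotient R/(G) ≅ F_p[X]/(g)
    have hle : Ideal.span {(X : Polynomial (ZMod p)) ^ n + 1} ≤ Ideal.span {g} := by
      rw [Ideal.span_singleton_le_span_singleton]
      exact hgdvd
    have hmap : Ideal.span {G} = (Ideal.span {g}).map
        (Ideal.Quotient.mkₐ (ZMod p) (Ideal.span {(X : Polynomial (ZMod p)) ^ n + 1})) := by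
      rw [Ideal.map_span, Set.image_singleton]
      rfl
    have hquot : Module.finrank (ZMod p) (Rpn p n ⧸ (Ideal.span {G}).restrictScalars (ZMod p))
        = g.natDegree := by
      have e1 := (Submodule.Quotient.restrictScalarsEquiv (ZMod p)
        (Ideal.span {G} : Ideal (Rpn p n)))
      have e2 := (DoubleQuot.quotQuotEquivQuotOfLEₐ (ZMod p) hle).toLinearEquiv
      have hgd : Module.finrank (ZMod p) (Polynomial (ZMod p) ⧸ Ideal.span {g})
          = g.natDegree := by
        have h := Module.finrank_eq_card_basis (AdjoinRoot.powerBasis' hgm).basis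
        exact h.trans (Fintype.card_fin _)
      rw [e1.finrank_eq]
      rw [← hgd]
      rw [hmap]
      exact e2.finrank_eq
    have hsum := Submodule.finrank_quotient_add_finrank
      ((Ideal.span {G}).restrictScalars (ZMod p))
    rw [hquot, hfr] at hsum
    rw [hrange] at hrk2
    omega
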